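/- Let T and T_m (m ∈ ℕ) be bounded self-adjoint linear operators on a Hilbert space H with T_m → T strongly. Let λ be in the essential spectrum of T, and let (λ_m, u_m) be eigenpairs of T_m with λ_m → λ and ‖u_m‖ = 1. Then (u_m) has a subsequence converging weakly to 0. -/

import Mathlib

open Filter

theorem stmt_1 {H : Type*} [NormedAddCommGroup H] [InnerProductSpace ℂ H]
    [CompleteSpace H]
    (T : H →L[ℂ] H) (Tm : ℕ → H →L[ℂ] H)
    (hT : IsSelfAdjoint T) (hTm : ∀ m, IsSelfAdjoint (Tm m))
    (hstrong : ∀ x : H, Filter.Tendsto (fun m => Tm m x) Filter.atTop (nhds (T x)))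
    (lam : ℂ) (hess : ∀ v : H, T v = lam • v → v = 0)
    (lamm : ℕ → ℂ) (um : ℕ → H)
    (heig : ∀ m, Tm m (um m) = lamm m • um m)
    (hnorm : ∀ m, ‖um m‖ = 1)
    (hconv : Filter.Tendsto lamm Filter.atTop (nhds lam)) :
    ∃ φ : ℕ → ℕ, StrictMono φ ∧
      ∀ x : H, Filter.Tendsto (fun n => (inner ℂ (um (φ n)) x : ℂ))
        Filter.atTop (nhds (0 : ℂ)) := by
  -- each eigenvalue is real (conj-fixed)
  have hreal : ∀ m, (starRingEnd ℂ) (lamm m) = lamm m := by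
    intro m
    have h1 : (inner ℂ (um m) (Tm m (um m)) : ℂ) = lamm m := by
      rw [heig m, inner_smul_right, inner_self_eq_norm_sq_to_K, hnorm m]
      norm_num
    have h2 : (inner ℂ (um m) (Tm m (um m)) : ℂ) = (starRingEnd ℂ) (lamm m) := by
      rw [← (hTm m).adjoint_eq, ContinuousLinearMap.adjoint_inner_right, heig m,
        inner_smul_left, inner_self_eq_norm_sq_to_K, hnorm m]
      norm_num
    rw [h1] at h2; exact h2.symm
  -- self-adjointness moves operators across inner products
  have hmove : ∀ m (u x : H), (inner ℂ u (Tm m x) : ℂ) = inner ℂ (Tm m u) x := by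
    intro m u x
    conv_rhs => rw [← (hTm m).adjoint_eq]
    exact (ContinuousLinearMap.adjoint_inner_left _ _ _).symm
  have hmoveT : ∀ (u x : H), (inner ℂ u (T x) : ℂ) = inner ℂ (T u) x := by
    intro u x
    conv_rhs => rw [← hT.adjoint_eq]
    exact (ContinuousLinearMap.adjoint_inner_left _ _ _).symm
  -- key algebraic identity
  have heq : ∀ m x, (inner ℂ (um m) (T x - lam • x) : ℂ)
      = (lamm m - lam) * inner ℂ (um m) x + inner ℂ (um m) (T x - Tm m x) := by
    intro m x
    have h1 : (inner ℂ (um m) (Tm m x) : ℂ) = lamm m * inner ℂ (um m) x := by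
      rw [hmove m, heig m, inner_smul_left, hreal m]
    simp only [inner_sub_right, inner_smul_right, h1]
    ring
  -- weak convergence on the range of T - lam
  have hkey : ∀ x : H, Tendsto (fun m => (inner ℂ (um m) (T x - lam • x) : ℂ))
      atTop (nhds 0) := by
    intro x
    have h1 : Tendsto (fun m => (lamm m - lam) * (inner ℂ (um m) x : ℂ)) atTop (nhds 0) := by
      apply squeeze_zero_norm (a := fun m => ‖lamm m - lam‖ * ‖x‖)
      · intro m
        rw [norm_mul]
        gcongr
        calc ‖(inner ℂ (um m) x : ℂ)‖ ≤ ‖um m‖ * ‖x‖ := norm_inner_le_norm _ _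
          _ = ‖x‖ := by rw [hnorm m, one_mul]
      · have : Tendsto (fun m => lamm m - lam) atTop (nhds 0) := by
          simpa using hconv.sub (tendsto_const_nhds : Filter.Tendsto (fun _ : ℕ => lam) atTop (nhds lam))
        simpa using (this.norm.mul_const ‖x‖)
    have h2 : Tendsto (fun m => (inner ℂ (um m) (T x - Tm m x) : ℂ)) atTop (nhds 0) := by
      apply squeeze_zero_norm (a := fun m => ‖T x - Tm m x‖)
      · intro m
        calc ‖(inner ℂ (um m) (T x - Tm m x) : ℂ)‖ ≤ ‖um m‖ * ‖T x - Tm m x‖ :=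
            norm_inner_le_norm _ _
          _ = ‖T x - Tm m x‖ := by rw [hnorm m, one_mul]
      · have : Tendsto (fun m => T x - Tm m x) atTop (nhds 0) := by
          simpa using ((tendsto_const_nhds : Filter.Tendsto (fun _ : ℕ => T x) atTop (nhds (T x))).sub (hstrong x))
        simpa using this.norm
    have := h1.add h2
    simp only [add_zero] at this
    exact this.congr (fun m => (heq m x).symm)
  -- λ is real
  have hlamreal : (starRingEnd ℂ) lam = lam := by
    have h1 : Tendsto (fun m => (starRingEnd ℂ) (lamm m)) atTop (nhds ((starRingEnd ℂ) lam)) :=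
      (Complex.continuous_conj.continuousAt.tendsto.comp hconv)
    have h2 : Tendsto (fun m => (starRingEnd ℂ) (lamm m)) atTop (nhds lam) := by
      exact hconv.congr (fun m => (hreal m).symm)
    exact tendsto_nhds_unique h1 h2
  -- the range of T - lam • id is dense
  set L : H →L[ℂ] H := T - lam • ContinuousLinearMap.id ℂ H with hL
  have hLapp : ∀ x, L x = T x - lam • x := by intro x; simp [hL]
  have hdense : Dense (Set.range L) := by
    have horth : (LinearMap.range (L : H →ₗ[ℂ] H))ᗮ = ⊥ := by
      rw [Submodule.eq_bot_iff]
      intro v hv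
      have hv' : ∀ x : H, (inner ℂ (L x) v : ℂ) = 0 := by
        intro x
        exact (Submodule.mem_orthogonal _ v).mp hv (L x) ⟨x, rfl⟩
      have : T v = lam • v := by
        have h3 : ∀ x : H, (inner ℂ x (T v - lam • v) : ℂ) = 0 := by
          intro x
          have h0 := hv' x
          rw [hLapp x, inner_sub_left, inner_smul_left] at h0
          rw [inner_sub_right, inner_smul_right, hmoveT x v, ← hlamreal]
          exact h0
        have h4 := h3 (T v - lam • v)
        rwa [inner_self_eq_zero, sub_eq_zero] at h4
      exact hess v this
    have htop : (LinearMap.range (L : H →ₗ[ℂ] H)).topologicalClosure = ⊤ :=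
      Submodule.topologicalClosure_eq_top_iff.mpr horth
    have := Submodule.dense_iff_topologicalClosure_eq_top.mpr htop
    simpa [LinearMap.coe_range, ContinuousLinearMap.coe_coe] using this
  refine ⟨id, strictMono_id, ?_⟩
  intro x
  rw [Metric.tendsto_atTop]
  intro ε hε
  obtain ⟨y, hy, hyx⟩ := Metric.mem_closure_iff.mp (hdense x) (ε / 2) (by linarith)
  obtain ⟨z, rfl⟩ := hy
  have hz := hkey z
  rw [Metric.tendsto_atTop] at hz
  obtain ⟨N, hN⟩ := hz (ε / 2) (by linarith)
  refine ⟨N, fun m hm => ?_⟩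
  have hNm := hN m hm
  rw [dist_zero_right] at hNm ⊢
  rw [← hLapp] at hNm
  calc ‖(inner ℂ (um m) x : ℂ)‖
      = ‖(inner ℂ (um m) ((x - L z) + L z) : ℂ)‖ := by rw [sub_add_cancel]
    _ = ‖(inner ℂ (um m) (x - L z) : ℂ) + inner ℂ (um m) (L z)‖ := by
        rw [inner_add_right]
    _ ≤ ‖(inner ℂ (um m) (x - L z) : ℂ)‖ + ‖(inner ℂ (um m) (L z) : ℂ)‖ := norm_add_le _ _
    _ ≤ ‖um m‖ * ‖x - L z‖ + ε / 2 := by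
        gcongr
        exact norm_inner_le_norm _ _
    _ < ε := by
        rw [hnorm m, one_mul]
        have : ‖x - L z‖ < ε / 2 := by simpa [dist_eq_norm] using hyx
        linarith
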